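/- Suppose A, A' ∈ ℂ^{n×n} satisfy ‖A‖_F = ‖A'‖_F = 1, λ, λ' ∈ ℂ, and v ∈ ℂ^n is nonzero with A_{λ,v} invertible. If μ(A,λ,v) · ( ‖A'−A‖_F + |λ'−λ| ) ≤ ε < 1, then A'_{λ',v} is invertible and (1−ε) · μ(A,λ,v) ≤ μ(A',λ',v) ≤ μ(A,λ,v)/(1−ε). -/

import Mathlib

noncomputable section

open Matrix Set

/-- `T_v`: the orthogonal complement of `v` in `ℂ^n`. -/
def Tv {n : ℕ} (v : EuclideanSpace ℂ (Fin n)) : Submodule ℂ (EuclideanSpace ℂ (Fin n)) :=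
  (ℂ ∙ v)ᗮ

/-- The linear map `A_{λ,v} : T_v → T_v`, `x ↦ P_{v⊥}((A - λ·Id) x)`. -/
def Alv {n : ℕ} (A : Matrix (Fin n) (Fin n) ℂ) (lam : ℂ) (v : EuclideanSpace ℂ (Fin n)) :
    Tv v →ₗ[ℂ] Tv v :=
  (Tv v).orthogonalProjectionOnto.toLinearMap ∘ₗ
    (Matrix.toEuclideanLin A - lam • LinearMap.id) ∘ₗ (Tv v).subtype

/-- `A_{λ,v}` as a continuous linear map. -/
def AlvC {n : ℕ} (A : Matrix (Fin n) (Fin n) ℂ) (lam : ℂ) (v : EuclideanSpace ℂ (Fin n)) :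
    Tv v →L[ℂ] Tv v :=
  LinearMap.toContinuousLinearMap (Alv A lam v)

/-- Frobenius norm of a complex matrix. -/
def frobNorm {n : ℕ} (A : Matrix (Fin n) (Fin n) ℂ) : ℝ :=
  Real.sqrt (∑ i, ∑ j, ‖A i j‖ ^ 2)

/-- The condition number `μ(A,λ,v) = ‖A‖_F ‖A_{λ,v}^{-1}‖`. -/
def mu {n : ℕ} (A : Matrix (Fin n) (Fin n) ℂ) (lam : ℂ) (v : EuclideanSpace ℂ (Fin n)) : ℝ :=
  frobNorm A * ‖(AlvC A lam v).inverse‖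

/-- Fubini-Study (angular) distance. -/
def dP {n : ℕ} (v w : EuclideanSpace ℂ (Fin n)) : ℝ :=
  Real.arccos (‖(inner ℂ v w : ℂ)‖ / (‖v‖ * ‖w‖))

/-- The distance on triples. -/
def distT {n : ℕ} (A : Matrix (Fin n) (Fin n) ℂ) (lam : ℂ) (v : EuclideanSpace ℂ (Fin n))
    (A' : Matrix (Fin n) (Fin n) ℂ) (lam' : ℂ) (v' : EuclideanSpace ℂ (Fin n)) : ℝ :=
  Real.sqrt ((frobNorm ((frobNorm A)⁻¹ • A - (frobNorm A')⁻¹ • A')) ^ 2 +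
    ‖lam / (frobNorm A : ℂ) - lam' / (frobNorm A' : ℂ)‖ ^ 2 + dP v v' ^ 2)

lemma frobNorm_nonneg {n : ℕ} (A : Matrix (Fin n) (Fin n) ℂ) : 0 ≤ frobNorm A :=
  Real.sqrt_nonneg _

lemma entry_apply {n : ℕ} (M : Matrix (Fin n) (Fin n) ℂ) (x : EuclideanSpace ℂ (Fin n)) (i : Fin n) :
    (Matrix.toEuclideanLin M x) i = ∑ j, M i j * x j := rfl

lemma norm_toEuclideanLin_apply_le {n : ℕ} (M : Matrix (Fin n) (Fin n) ℂ)
    (x : EuclideanSpace ℂ (Fin n)) :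
    ‖Matrix.toEuclideanLin M x‖ ≤ frobNorm M * ‖x‖ := by
  have hx : ∀ i : Fin n, ‖(Matrix.toEuclideanLin M x) i‖ ≤ Real.sqrt (∑ j, ‖M i j‖ ^ 2) * ‖x‖ := by
    intro i
    set u : EuclideanSpace ℂ (Fin n) := (WithLp.equiv 2 (Fin n → ℂ)).symm (fun j => star (M i j)) with hu
    have hiu : (inner ℂ u x : ℂ) = ∑ j, M i j * x j := by
      rw [PiLp.inner_apply]
      refine Finset.sum_congr rfl fun j _ => ?_
      have huj : u j = star (M i j) := rfl
      rw [RCLike.inner_apply', huj, starRingEnd_apply, star_star]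
    have hnu : ‖u‖ = Real.sqrt (∑ j, ‖M i j‖ ^ 2) := by
      rw [EuclideanSpace.norm_eq]
      congr 1
      refine Finset.sum_congr rfl fun j _ => ?_
      have huj : u j = star (M i j) := rfl
      rw [huj, norm_star]
    calc ‖(Matrix.toEuclideanLin M x) i‖ = ‖(inner ℂ u x : ℂ)‖ := by rw [hiu, entry_apply]
      _ ≤ ‖u‖ * ‖x‖ := norm_inner_le_norm u x
      _ = Real.sqrt (∑ j, ‖M i j‖ ^ 2) * ‖x‖ := by rw [hnu]
  have h1 : ‖Matrix.toEuclideanLin M x‖ ^ 2 ≤ (∑ i, ∑ j, ‖M i j‖ ^ 2) * ‖x‖ ^ 2 := by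
    rw [EuclideanSpace.norm_eq, Real.sq_sqrt (by positivity), Finset.sum_mul]
    refine Finset.sum_le_sum fun i _ => ?_
    calc ‖(Matrix.toEuclideanLin M x) i‖ ^ 2
        ≤ (Real.sqrt (∑ j, ‖M i j‖ ^ 2) * ‖x‖) ^ 2 := by
          apply pow_le_pow_left₀ (norm_nonneg _) (hx i)
      _ = (∑ j, ‖M i j‖ ^ 2) * ‖x‖ ^ 2 := by
          rw [mul_pow, Real.sq_sqrt (by positivity)]
  have h2 : 0 ≤ frobNorm M * ‖x‖ := mul_nonneg (frobNorm_nonneg M) (norm_nonneg x)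
  have h3 : ‖Matrix.toEuclideanLin M x‖ ^ 2 ≤ (frobNorm M * ‖x‖) ^ 2 := by
    rw [mul_pow, frobNorm, Real.sq_sqrt (by positivity)]
    exact h1
  exact (pow_le_pow_iff_left₀ (norm_nonneg _) h2 (by norm_num)).mp h3

lemma AlvC_sub_norm_le {n : ℕ} (A A' : Matrix (Fin n) (Fin n) ℂ) (lam lam' : ℂ)
    (v : EuclideanSpace ℂ (Fin n)) :
    ‖AlvC A' lam' v - AlvC A lam v‖ ≤ frobNorm (A' - A) + ‖lam' - lam‖ := by
  refine ContinuousLinearMap.opNorm_le_bound _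
    (add_nonneg (frobNorm_nonneg _) (norm_nonneg _)) fun x => ?_
  have hx : (AlvC A' lam' v - AlvC A lam v) x =
      (Tv v).orthogonalProjectionOnto (Matrix.toEuclideanLin (A' - A) (x : EuclideanSpace ℂ (Fin n))
        - (lam' - lam) • (x : EuclideanSpace ℂ (Fin n))) := by
    have : (AlvC A' lam' v - AlvC A lam v) x = Alv A' lam' v x - Alv A lam v x := rfl
    rw [this]
    have h1 : Alv A' lam' v x = (Tv v).orthogonalProjectionOnto
        (Matrix.toEuclideanLin A' (x : EuclideanSpace ℂ (Fin n)) - lam' • (x : EuclideanSpace ℂ (Fin n))) := rfl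
    have h2 : Alv A lam v x = (Tv v).orthogonalProjectionOnto
        (Matrix.toEuclideanLin A (x : EuclideanSpace ℂ (Fin n)) - lam • (x : EuclideanSpace ℂ (Fin n))) := rfl
    rw [h1, h2, ← map_sub]
    congr 1
    simp only [map_sub, LinearMap.sub_apply, sub_smul]
    abel
  rw [hx]
  have hnx : ‖(x : EuclideanSpace ℂ (Fin n))‖ = ‖x‖ := rfl
  calc ‖((Tv v).orthogonalProjectionOnto (Matrix.toEuclideanLin (A' - A) (x : EuclideanSpace ℂ (Fin n))
        - (lam' - lam) • (x : EuclideanSpace ℂ (Fin n))) : Tv v)‖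
      ≤ ‖Matrix.toEuclideanLin (A' - A) (x : EuclideanSpace ℂ (Fin n))
        - (lam' - lam) • (x : EuclideanSpace ℂ (Fin n))‖ := by
        have := ContinuousLinearMap.le_of_opNorm_le ((Tv v).orthogonalProjectionOnto)
          (Submodule.orthogonalProjectionOnto_norm_le (Tv v))
          (Matrix.toEuclideanLin (A' - A) (x : EuclideanSpace ℂ (Fin n))
            - (lam' - lam) • (x : EuclideanSpace ℂ (Fin n)))
        simpa using this
    _ ≤ ‖Matrix.toEuclideanLin (A' - A) (x : EuclideanSpace ℂ (Fin n))‖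
        + ‖(lam' - lam) • (x : EuclideanSpace ℂ (Fin n))‖ := norm_sub_le _ _
    _ ≤ frobNorm (A' - A) * ‖x‖ + ‖lam' - lam‖ * ‖x‖ := by
        refine add_le_add ?_ ?_
        · rw [← hnx]; exact norm_toEuclideanLin_apply_le _ _
        · rw [norm_smul, hnx]
    _ = (frobNorm (A' - A) + ‖lam' - lam‖) * ‖x‖ := by ring


lemma clm_norm_sub_le {n : ℕ} {v : EuclideanSpace ℂ (Fin n)} (f g : Tv v →L[ℂ] Tv v) :
    ‖f - g‖ ≤ ‖f‖ + ‖g‖ := norm_sub_le f g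

lemma clm_norm_add_le {n : ℕ} {v : EuclideanSpace ℂ (Fin n)} (f g : Tv v →L[ℂ] Tv v) :
    ‖f + g‖ ≤ ‖f‖ + ‖g‖ := norm_add_le f g

set_option maxHeartbeats 2000000 in
set_option synthInstance.maxHeartbeats 1000000 in
/-- Lemma: perturbing `A` and `λ` while keeping `v` fixed. -/
theorem mu_perturb_A_lam {n : ℕ} (A A' : Matrix (Fin n) (Fin n) ℂ)
    (hA : frobNorm A = 1) (hA' : frobNorm A' = 1)
    (lam lam' : ℂ) (v : EuclideanSpace ℂ (Fin n)) (hv : v ≠ 0)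
    (hinv : Function.Bijective (Alv A lam v))
    (ε : ℝ) (hε1 : ε < 1)
    (hcond : mu A lam v * (frobNorm (A' - A) + ‖lam' - lam‖) ≤ ε) :
    Function.Bijective (Alv A' lam' v) ∧
      (1 - ε) * mu A lam v ≤ mu A' lam' v ∧
      mu A' lam' v ≤ mu A lam v / (1 - ε) := by
  have hmu0 : 0 ≤ mu A lam v :=
    mul_nonneg (frobNorm_nonneg A) (ContinuousLinearMap.opNorm_nonneg _)
  have hδ0 : 0 ≤ frobNorm (A' - A) + ‖lam' - lam‖ :=
    add_nonneg (frobNorm_nonneg _) (norm_nonneg _)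
  have hε0 : 0 ≤ ε := le_trans (mul_nonneg hmu0 hδ0) hcond
  have h1ε : 0 < 1 - ε := by linarith
  set g := LinearEquiv.ofBijective (Alv A lam v) hinv with hg
  set u : (Tv v →L[ℂ] Tv v)ˣ :=
    { val := AlvC A lam v
      inv := LinearMap.toContinuousLinearMap (g.symm : Tv v →ₗ[ℂ] Tv v)
      val_inv := by
        refine ContinuousLinearMap.ext fun x => ?_
        rw [ContinuousLinearMap.mul_apply, ContinuousLinearMap.one_apply]
        exact g.apply_symm_apply x
      inv_val := by
        refine ContinuousLinearMap.ext fun x => ?_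
        rw [ContinuousLinearMap.mul_apply, ContinuousLinearMap.one_apply]
        exact g.symm_apply_apply x } with hudef
  have huval : (↑u : Tv v →L[ℂ] Tv v) = AlvC A lam v := rfl
  have hTinv : (AlvC A lam v).inverse = ((u⁻¹ : _ˣ) : Tv v →L[ℂ] Tv v) := by
    rw [← ContinuousLinearMap.ringInverse_eq_inverse, ← huval]
    exact Ring.inverse_unit u
  have hmuA : mu A lam v = ‖((u⁻¹ : _ˣ) : Tv v →L[ℂ] Tv v)‖ := by
    rw [mu, hA, hTinv, one_mul]
  set Ec : Tv v →L[ℂ] Tv v := AlvC A' lam' v - AlvC A lam v with hEc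
  have hEnorm : ‖Ec‖ ≤ frobNorm (A' - A) + ‖lam' - lam‖ := AlvC_sub_norm_le A A' lam lam' v
  set s : Tv v →L[ℂ] Tv v := ((u⁻¹ : _ˣ) : Tv v →L[ℂ] Tv v) * Ec with hs
  have hsε : ‖s‖ ≤ ε := by
    calc ‖s‖ ≤ ‖((u⁻¹ : _ˣ) : Tv v →L[ℂ] Tv v)‖ * ‖Ec‖ := ContinuousLinearMap.opNorm_comp_le _ _
      _ ≤ ‖((u⁻¹ : _ˣ) : Tv v →L[ℂ] Tv v)‖ * (frobNorm (A' - A) + ‖lam' - lam‖) :=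
          mul_le_mul_of_nonneg_left hEnorm (ContinuousLinearMap.opNorm_nonneg _)
      _ ≤ ε := by rw [← hmuA]; exact hcond
  have hsn : ‖-s‖ = ‖s‖ := norm_neg s
  have hs1 : ‖-s‖ < 1 := by rw [hsn]; exact lt_of_le_of_lt hsε hε1
  set w : (Tv v →L[ℂ] Tv v)ˣ := Units.oneSub (-s) hs1 with hwdef
  have hw : (↑w : Tv v →L[ℂ] Tv v) = 1 + s := by
    rw [hwdef, Units.val_oneSub, sub_neg_eq_add]
  set W : (Tv v →L[ℂ] Tv v)ˣ := u * w with hWdef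
  have hW : (↑W : Tv v →L[ℂ] Tv v) = AlvC A' lam' v := by
    calc (↑W : Tv v →L[ℂ] Tv v) = ↑u * (1 + s) := by rw [hWdef, Units.val_mul, hw]
      _ = ↑u + ↑u * (((u⁻¹ : _ˣ) : Tv v →L[ℂ] Tv v) * Ec) := by rw [mul_add, mul_one, hs]
      _ = AlvC A lam v + Ec := by rw [← mul_assoc, u.mul_inv, one_mul, huval]
      _ = AlvC A' lam' v := by rw [hEc]; abel
  have hWapp : ∀ x : Tv v, (↑W : Tv v →L[ℂ] Tv v) x = Alv A' lam' v x := by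
    intro x; rw [hW]; rfl
  have hbij : Function.Bijective (Alv A' lam' v) := by
    have hfun : ⇑(Alv A' lam' v) = ⇑(↑W : Tv v →L[ℂ] Tv v) := by
      funext x; exact (hWapp x).symm
    rw [hfun]
    refine Function.bijective_iff_has_inverse.mpr
      ⟨⇑((W⁻¹ : _ˣ) : Tv v →L[ℂ] Tv v), fun x => ?_, fun x => ?_⟩
    · show ((W⁻¹ : _ˣ) : Tv v →L[ℂ] Tv v) ((↑W : Tv v →L[ℂ] Tv v) x) = x
      rw [← ContinuousLinearMap.mul_apply, W.inv_mul, ContinuousLinearMap.one_apply]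
    · show (↑W : Tv v →L[ℂ] Tv v) (((W⁻¹ : _ˣ) : Tv v →L[ℂ] Tv v) x) = x
      rw [← ContinuousLinearMap.mul_apply, W.mul_inv, ContinuousLinearMap.one_apply]
  have hinv' : (AlvC A' lam' v).inverse = ((W⁻¹ : _ˣ) : Tv v →L[ℂ] Tv v) := by
    rw [← ContinuousLinearMap.ringInverse_eq_inverse, ← hW]
    exact Ring.inverse_unit W
  have hmuA' : mu A' lam' v = ‖((W⁻¹ : _ˣ) : Tv v →L[ℂ] Tv v)‖ := by
    rw [mu, hA', hinv', one_mul]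
  have hone : ‖(1 : Tv v →L[ℂ] Tv v)‖ ≤ 1 := by
    rw [ContinuousLinearMap.one_def]; exact ContinuousLinearMap.norm_id_le
  have hWinvEq : ((W⁻¹ : _ˣ) : Tv v →L[ℂ] Tv v) =
      ((w⁻¹ : _ˣ) : Tv v →L[ℂ] Tv v) * ((u⁻¹ : _ˣ) : Tv v →L[ℂ] Tv v) := by
    rw [hWdef, _root_.mul_inv_rev, Units.val_mul]
  have hwinv_eq : ((w⁻¹ : _ˣ) : Tv v →L[ℂ] Tv v) =
      1 - s * ((w⁻¹ : _ˣ) : Tv v →L[ℂ] Tv v) := by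
    have h := w.mul_inv
    rw [hw, add_mul, one_mul] at h
    rw [← h]; abel
  have hwinv_norm : ‖((w⁻¹ : _ˣ) : Tv v →L[ℂ] Tv v)‖ ≤
      1 + ε * ‖((w⁻¹ : _ˣ) : Tv v →L[ℂ] Tv v)‖ := by
    calc ‖((w⁻¹ : _ˣ) : Tv v →L[ℂ] Tv v)‖
        = ‖1 - s * ((w⁻¹ : _ˣ) : Tv v →L[ℂ] Tv v)‖ := by rw [← hwinv_eq]
      _ ≤ ‖(1 : Tv v →L[ℂ] Tv v)‖ + ‖s * ((w⁻¹ : _ˣ) : Tv v →L[ℂ] Tv v)‖ := clm_norm_sub_le _ _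
      _ ≤ 1 + ε * ‖((w⁻¹ : _ˣ) : Tv v →L[ℂ] Tv v)‖ := by
          refine add_le_add hone ?_
          calc ‖s * ((w⁻¹ : _ˣ) : Tv v →L[ℂ] Tv v)‖
              ≤ ‖s‖ * ‖((w⁻¹ : _ˣ) : Tv v →L[ℂ] Tv v)‖ := ContinuousLinearMap.opNorm_comp_le _ _
            _ ≤ ε * ‖((w⁻¹ : _ˣ) : Tv v →L[ℂ] Tv v)‖ :=
                mul_le_mul_of_nonneg_right hsε (ContinuousLinearMap.opNorm_nonneg _)
  have hwle : ‖((w⁻¹ : _ˣ) : Tv v →L[ℂ] Tv v)‖ ≤ 1 / (1 - ε) := by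
    rw [le_div_iff₀ h1ε]
    nlinarith [hwinv_norm]
  have hwnorm : ‖(↑w : Tv v →L[ℂ] Tv v)‖ ≤ 1 + ε := by
    rw [hw]
    calc ‖(1 : Tv v →L[ℂ] Tv v) + s‖ ≤ ‖(1 : Tv v →L[ℂ] Tv v)‖ + ‖s‖ := clm_norm_add_le _ _
      _ ≤ 1 + ε := add_le_add hone hsε
  have hupper : mu A' lam' v ≤ mu A lam v / (1 - ε) := by
    rw [hmuA', hmuA]
    calc ‖((W⁻¹ : _ˣ) : Tv v →L[ℂ] Tv v)‖
        ≤ ‖((w⁻¹ : _ˣ) : Tv v →L[ℂ] Tv v)‖ * ‖((u⁻¹ : _ˣ) : Tv v →L[ℂ] Tv v)‖ := by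
          rw [hWinvEq]; exact ContinuousLinearMap.opNorm_comp_le _ _
      _ ≤ (1 / (1 - ε)) * ‖((u⁻¹ : _ˣ) : Tv v →L[ℂ] Tv v)‖ :=
          mul_le_mul_of_nonneg_right hwle (ContinuousLinearMap.opNorm_nonneg _)
      _ = ‖((u⁻¹ : _ˣ) : Tv v →L[ℂ] Tv v)‖ / (1 - ε) := by ring
  have huinv_eq : ((u⁻¹ : _ˣ) : Tv v →L[ℂ] Tv v) =
      (↑w : Tv v →L[ℂ] Tv v) * ((W⁻¹ : _ˣ) : Tv v →L[ℂ] Tv v) := by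
    rw [hWinvEq, ← mul_assoc, w.mul_inv, one_mul]
  have hule : ‖((u⁻¹ : _ˣ) : Tv v →L[ℂ] Tv v)‖ ≤
      (1 + ε) * ‖((W⁻¹ : _ˣ) : Tv v →L[ℂ] Tv v)‖ := by
    calc ‖((u⁻¹ : _ˣ) : Tv v →L[ℂ] Tv v)‖
        = ‖(↑w : Tv v →L[ℂ] Tv v) * ((W⁻¹ : _ˣ) : Tv v →L[ℂ] Tv v)‖ := by rw [← huinv_eq]
      _ ≤ ‖(↑w : Tv v →L[ℂ] Tv v)‖ * ‖((W⁻¹ : _ˣ) : Tv v →L[ℂ] Tv v)‖ := ContinuousLinearMap.opNorm_comp_le _ _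
      _ ≤ (1 + ε) * ‖((W⁻¹ : _ˣ) : Tv v →L[ℂ] Tv v)‖ :=
          mul_le_mul_of_nonneg_right hwnorm (ContinuousLinearMap.opNorm_nonneg _)
  have hlower : (1 - ε) * mu A lam v ≤ mu A' lam' v := by
    rw [hmuA, hmuA']
    nlinarith [ContinuousLinearMap.opNorm_nonneg ((W⁻¹ : _ˣ) : Tv v →L[ℂ] Tv v),
      ContinuousLinearMap.opNorm_nonneg ((u⁻¹ : _ˣ) : Tv v →L[ℂ] Tv v),
      mul_nonneg (mul_nonneg hε0 hε0)
        (ContinuousLinearMap.opNorm_nonneg ((W⁻¹ : _ˣ) : Tv v →L[ℂ] Tv v))]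
  exact ⟨hbij, hlower, hupper⟩


end
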